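/- Let V be a finite-dimensional commutative real algebra with positive definite associative symmetric bilinear form, and let c be an idempotent such that ⟨cy,y⟩ ≤ (1/2)⟨y,y⟩ for all y orthogonal to c. Then the eigenvalue 1 of L_c is simple: the eigenspace {y : cy = y} is one-dimensional (spanned by c). -/

import Mathlib

/-- if `c` is a nonzero idempotent with `⟨cy,y⟩ ≤ (1/2)⟨y,y⟩` for all
`y ⊥ c`, then the eigenvalue 1 of `L_c` is simple: `{y : cy = y}` is spanned by `c`. -/
theorem stmt_8 {V : Type*} [AddCommGroup V] [Module ℝ V] [FiniteDimensional ℝ V]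
    (mul : V →ₗ[ℝ] V →ₗ[ℝ] V) (hcomm : ∀ x y, mul x y = mul y x)
    (B : V →ₗ[ℝ] V →ₗ[ℝ] ℝ) (hsymm : ∀ x y, B x y = B y x)
    (hassoc : ∀ x y z, B (mul x y) z = B x (mul y z))
    (hpos : ∀ x, x ≠ 0 → 0 < B x x)
    (c : V) (hc : mul c c = c) (hc0 : c ≠ 0)
    (hext : ∀ y, B y c = 0 → B (mul c y) y ≤ (1 / 2 : ℝ) * B y y) :
    {y : V | mul c y = y} = Set.range (fun t : ℝ => t • c) := by
  ext y
  simp only [Set.mem_setOf_eq, Set.mem_range]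
  constructor
  · intro hy
    have hBcc : (0:ℝ) < B c c := hpos c hc0
    set t : ℝ := B y c / B c c with ht
    set z : V := y - t • c with hz
    refine ⟨t, ?_⟩
    have hzc : B z c = 0 := by
      simp [hz, ht, map_sub, map_smul]
      field_simp
      ring
    have hcz : mul c z = z := by
      simp only [hz, map_sub, map_smul, hy, hc]
    have hle := hext z hzc
    rw [hcz] at hle
    have hz0 : z = 0 := by
      by_contra h
      have := hpos z h
      nlinarith
    rw [hz] at hz0
    exact (sub_eq_zero.mp hz0).symm
  · rintro ⟨t, rfl⟩
    simp [map_smul, hc]
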